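/- Let X be a metric space and (f_i)_{i∈ℕ} a sequence of functions from X to X. The nonautonomous dynamical system (X,(f_i)) has shadowing if and only if for all ε > 0 there exists δ > 0 such that for every sequence (g_i)_{i∈ℕ} of functions from X to X with ρ((g_i),(f_i)) < δ, every (g_i)-orbit is ε-shadowed by an (f_i)-orbit. -/

import Mathlib

open scoped ENNReal

/-- supremum distance `ρ(f,g) = sup_x d(f x, g x)` between self-maps. -/
noncomputable def rho {X : Type*} [PseudoMetricSpace X] (f g : X → X) : ℝ≥0∞ :=
  ⨆ x, edist (f x) (g x)

/-- supremum distance between sequences of self-maps. -/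
noncomputable def rhoSeq {X : Type*} [PseudoMetricSpace X] (f g : ℕ → X → X) : ℝ≥0∞ :=
  ⨆ i, rho (f i) (g i)

/-- `seqComp f i = f_{i-1} ∘ ⋯ ∘ f_0`, with `seqComp f 0 = id`. -/
def seqComp {X : Type*} (f : ℕ → X → X) : ℕ → X → X
  | 0 => id
  | n + 1 => f n ∘ seqComp f n

/-- The nonautonomous system `(X, (f_i))` has shadowing. -/
def ShadowingSeq {X : Type*} [MetricSpace X] (f : ℕ → X → X) : Prop :=
  ∀ ε > (0 : ℝ), ∃ δ > (0 : ℝ), ∀ x : ℕ → X,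
    (∀ i : ℕ, dist (f i (x i)) (x (i + 1)) < δ) →
    ∃ z : X, ∀ i : ℕ, dist (x i) (seqComp f i z) < ε

theorem stmt2 {X : Type*} [MetricSpace X] (f : ℕ → X → X) :
    ShadowingSeq f ↔
      ∀ ε > (0 : ℝ), ∃ δ > (0 : ℝ), ∀ g : ℕ → X → X,
        rhoSeq g f < ENNReal.ofReal δ →
        ∀ x : X, ∃ z : X, ∀ i : ℕ, dist (seqComp g i x) (seqComp f i z) < ε := by
  classical
  constructor
  · intro hS ε hε
    obtain ⟨δ, hδ, hδ'⟩ := hS ε hε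
    refine ⟨δ, hδ, fun g hg x => ?_⟩
    apply hδ'
    intro i
    have hle : edist (g i (seqComp g i x)) (f i (seqComp g i x)) ≤ rhoSeq g f :=
      le_trans (le_iSup (fun y => edist (g i y) (f i y)) (seqComp g i x))
        (le_iSup (fun j => rho (g j) (f j)) i)
    have hlt : dist (g i (seqComp g i x)) (f i (seqComp g i x)) < δ :=
      edist_lt_ofReal.mp (lt_of_le_of_lt hle hg)
    simpa [seqComp, dist_comm] using hlt
  · intro h ε hε
    obtain ⟨δ, hδ, hδ'⟩ := h ε hε
    refine ⟨δ / 2, by linarith, fun x hx => ?_⟩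
    set g : ℕ → X → X := fun i y => if y = x i then x (i + 1) else f i y with hgdef
    have hgr : rhoSeq g f < ENNReal.ofReal δ := by
      have hbound : rhoSeq g f ≤ ENNReal.ofReal (δ / 2) := by
        refine iSup_le fun i => iSup_le fun y => ?_
        by_cases hy : y = x i
        · have : dist (x (i + 1)) (f i (x i)) < δ / 2 := by
            rw [dist_comm]; exact hx i
          simp only [hgdef, hy, if_pos rfl]
          exact le_of_lt (edist_lt_ofReal.mpr this)
        · simp [hgdef, hy]
      exact lt_of_le_of_lt hbound
        ((ENNReal.ofReal_lt_ofReal_iff hδ).mpr (by linarith))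
    have horb : ∀ i, seqComp g i (x 0) = x i := by
      intro i
      induction i with
      | zero => rfl
      | succ n ih =>
        show g n (seqComp g n (x 0)) = x (n + 1)
        rw [ih]; simp [hgdef]
    obtain ⟨z, hz⟩ := hδ' g hgr (x 0)
    exact ⟨z, fun i => by simpa [horb i] using hz i⟩
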